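/- Let Y and Z be metric spaces, each equipped with an action of a group G by isometries that is metrically properly discontinuous (i.e. for every point w of the space there exists ε > 0 such that the set {g ∈ G : dist(w, g • w) < ε} is finite). Let h : Y → Z be a G-equivariant continuous injection such that the induced map between the orbit spaces Y/G → Z/G (each endowed with the quotient topology) is a homeomorphism. Then h itself is a homeomorphism. -/

import Mathlib

/-- For every point `z`, there is `ε > 0` such that any group element moving `z` by less
than `ε` actually fixes `z`.  This follows from metrically proper discontinuity. -/
lemma exists_eps_fix {G Z : Type*} [Group G] [MetricSpace Z] [MulAction G Z]
    (hdisc : ∀ w : Z, ∃ ε > (0 : ℝ), {g : G | dist w (g • w) < ε}.Finite) (z : Z) :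
    ∃ ε > (0 : ℝ), ∀ g : G, dist z (g • z) < ε → g • z = z := by
  obtain ⟨ε₀, hε₀, hfin⟩ := hdisc z
  set T : Set G := {g : G | dist z (g • z) < ε₀ ∧ g • z ≠ z} with hT
  have hTfin : T.Finite := hfin.subset (fun g hg => hg.1)
  set D : Set ℝ := insert ε₀ ((fun g : G => dist z (g • z)) '' T) with hD
  have hDfin : D.Finite := ((hTfin.image _).insert _)
  have hDne : D.Nonempty := Set.insert_nonempty _ _
  have hDpos : ∀ d ∈ D, 0 < d := by
    rintro d (rfl | ⟨g, hg, rfl⟩)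
    · exact hε₀
    · exact dist_pos.mpr (Ne.symm hg.2)
  refine ⟨sInf D, hDpos _ (hDne.csInf_mem hDfin), ?_⟩
  intro g hg
  by_contra hne
  have h1 : dist z (g • z) < ε₀ :=
    lt_of_lt_of_le hg (csInf_le hDfin.bddBelow (Set.mem_insert _ _))
  have hmem : dist z (g • z) ∈ D := Set.mem_insert_of_mem _ ⟨g, ⟨h1, hne⟩, rfl⟩
  exact absurd (lt_of_lt_of_le hg (csInf_le hDfin.bddBelow hmem)) (lt_irrefl _)

/-- Let `Y` and `Z` be metric spaces, each equipped with an action of a group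
`G` by isometries that is metrically properly discontinuous. Let `h : Y → Z` be a
`G`-equivariant continuous injection such that the induced map between the orbit spaces
`Y/G → Z/G` (with the quotient topologies) is a homeomorphism. Then `h` is a homeomorphism. -/
theorem equivariant_injection_isHomeomorph
    {G Y Z : Type*} [Group G] [MetricSpace Y] [MetricSpace Z]
    [MulAction G Y] [MulAction G Z]
    (hisoY : ∀ g : G, Isometry (fun y : Y => g • y))
    (hisoZ : ∀ g : G, Isometry (fun z : Z => g • z))
    (hdiscY : ∀ w : Y, ∃ ε > (0 : ℝ), {g : G | dist w (g • w) < ε}.Finite)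
    (hdiscZ : ∀ w : Z, ∃ ε > (0 : ℝ), {g : G | dist w (g • w) < ε}.Finite)
    (h : Y → Z) (hcont : Continuous h) (hinj : Function.Injective h)
    (hequiv : ∀ (g : G) (y : Y), h (g • y) = g • h y)
    (H : Quotient (MulAction.orbitRel G Y) ≃ₜ Quotient (MulAction.orbitRel G Z))
    (hH : ∀ y : Y, H (Quotient.mk (MulAction.orbitRel G Y) y)
        = Quotient.mk (MulAction.orbitRel G Z) (h y)) :
    IsHomeomorph h := by
  classical
  -- the orbit quotient map on `Y` is open
  have hπYopen : IsOpenMap (Quotient.mk (MulAction.orbitRel G Y)) := by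
    intro U hU
    rw [← (isQuotientMap_quotient_mk' :
        Topology.IsQuotientMap (Quotient.mk (MulAction.orbitRel G Y))).isOpen_preimage]
    have hset : Quotient.mk (MulAction.orbitRel G Y) ⁻¹'
        (Quotient.mk (MulAction.orbitRel G Y) '' U)
        = ⋃ g : G, (fun y : Y => g • y) ⁻¹' U := by
      ext y
      simp only [Set.mem_preimage, Set.mem_image, Set.mem_iUnion]
      constructor
      · rintro ⟨u, hu, he⟩
        obtain ⟨g, hg⟩ : u ∈ MulAction.orbit G y := Quotient.eq.mp he
        exact ⟨g, by simpa [hg] using hu⟩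
      · rintro ⟨g, hg⟩
        exact ⟨g • y, hg, Quotient.sound (MulAction.mem_orbit y g)⟩
    have : IsOpen (Quotient.mk (MulAction.orbitRel G Y) ⁻¹'
        (Quotient.mk (MulAction.orbitRel G Y) '' U)) := by
      rw [hset]
      exact isOpen_iUnion fun g => (hisoY g).continuous.isOpen_preimage U hU
    exact this
  -- surjectivity of `h`
  have hsurj : Function.Surjective h := by
    intro z
    obtain ⟨q, hq⟩ := H.surjective (Quotient.mk (MulAction.orbitRel G Z) z)
    obtain ⟨y, rfl⟩ := Quotient.exists_rep q
    rw [hH] at hq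
    obtain ⟨g, hg⟩ : h y ∈ MulAction.orbit G z := Quotient.eq.mp hq
    exact ⟨g⁻¹ • y, by rw [hequiv, ← hg, inv_smul_smul]⟩
  set e : Y ≃ Z := Equiv.ofBijective h ⟨hinj, hsurj⟩ with he
  have heinv : ∀ z : Z, h (e.symm z) = z := fun z => e.apply_symm_apply z
  have hsymmcont : Continuous e.symm := by
    rw [Metric.continuous_iff]
    intro z η hη
    set y : Y := e.symm z with hy
    have hyz : h y = z := heinv z
    obtain ⟨ε₁, hε₁, hkey⟩ := exists_eps_fix hdiscZ z
    obtain ⟨δ, hδ, hδc⟩ := Metric.continuousAt_iff.mp hcont.continuousAt (ε₁ / 2) (half_pos hε₁)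
    set ρ : ℝ := min δ η with hρ
    have hρpos : 0 < ρ := lt_min hδ hη
    set W : Set Z := Quotient.mk (MulAction.orbitRel G Z) ⁻¹'
      (H '' (Quotient.mk (MulAction.orbitRel G Y) '' Metric.ball y ρ)) with hW
    have hWopen : IsOpen W :=
      (H.isOpenMap _ (hπYopen _ Metric.isOpen_ball)).preimage
        (isQuotientMap_quot_mk :
          Topology.IsQuotientMap (Quotient.mk (MulAction.orbitRel G Z))).continuous
    have hzW : z ∈ W := by
      refine Set.mem_preimage.mpr ⟨_, ⟨y, Metric.mem_ball_self hρpos, rfl⟩, ?_⟩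
      rw [hH, hyz]
    obtain ⟨ε₂, hε₂, hball⟩ := Metric.isOpen_iff.mp hWopen z hzW
    refine ⟨min ε₂ (ε₁ / 2), lt_min hε₂ (half_pos hε₁), ?_⟩
    intro z' hz'
    have hz'W : z' ∈ W := hball (lt_of_lt_of_le hz' (min_le_left _ _))
    obtain ⟨v, ⟨c, hc, rfl⟩, hv⟩ := hz'W
    rw [hH] at hv
    set y' : Y := e.symm z' with hy'
    have hy'z : h y' = z' := heinv z'
    rw [← hy'z] at hv
    obtain ⟨g, hg⟩ : h c ∈ MulAction.orbit G (h y') := Quotient.eq.mp hv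
    have hgc : g • y' = c := hinj (by rw [hequiv]; exact hg)
    have hcy : dist c y < ρ := Metric.mem_ball.mp hc
    have h1 : dist (h c) z < ε₁ / 2 := by
      have := hδc (show dist c y < δ from lt_of_lt_of_le hcy (min_le_left _ _))
      rwa [hyz] at this
    have h2 : dist z (g • z) < ε₁ := by
      have hc' : h c = g • z' := by rw [← hgc, hequiv, hy'z]
      have : dist (g • z') (g • z) = dist z' z := (hisoZ g).dist_eq z' z
      calc dist z (g • z) ≤ dist z (g • z') + dist (g • z') (g • z) := dist_triangle _ _ _
        _ = dist (h c) z + dist z' z := by rw [dist_comm z (g • z'), hc', this]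
        _ < ε₁ / 2 + ε₁ / 2 := by
            exact add_lt_add h1 (lt_of_lt_of_le hz' (min_le_right _ _))
        _ = ε₁ := add_halves _
    have hgz : g • z = z := hkey g h2
    have hgy : g • y = y := hinj (by rw [hequiv, hyz]; exact hgz)
    have hdyy : dist (g • y') (g • y) = dist y' y := (hisoY g).dist_eq y' y
    rw [hgc, hgy] at hdyy
    calc dist (e.symm z') (e.symm z) = dist y' y := rfl
      _ = dist c y := hdyy.symm
      _ < ρ := hcy
      _ ≤ η := min_le_right _ _
  rw [isHomeomorph_iff_exists_inverse]
  exact ⟨hcont, e.symm, fun y => e.symm_apply_apply y, heinv, hsymmcont⟩
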